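/- For 0 < a < 1, the cubic f(w) = 22w^3 - 23(a+1)w^2 + (5a^2+16a+5)w - a(a+1) has exactly one real root in each of the intervals (0, a), (a, (a+1)/2), and ((a+1)/2, 1). -/
import Mathlib

noncomputable def Fc (a w : ℝ) : ℝ :=
  22 * w ^ 3 - 23 * (a + 1) * w ^ 2 + (5 * a ^ 2 + 16 * a + 5) * w - a * (a + 1)

lemma Fc_pair (a : ℝ) {u v : ℝ} (hu : Fc a u = 0) (hv : Fc a v = 0) (huv : u ≠ v) :
    22 * (u ^ 2 + u * v + v ^ 2) - 23 * (a + 1) * (u + v) + (5 * a ^ 2 + 16 * a + 5) = 0 := by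
  have h : (u - v) * (22 * (u ^ 2 + u * v + v ^ 2) - 23 * (a + 1) * (u + v)
      + (5 * a ^ 2 + 16 * a + 5)) = 0 := by
    unfold Fc at hu hv; linear_combination hu - hv
  rcases mul_eq_zero.mp h with h | h
  · exact absurd (sub_eq_zero.mp h) huv
  · exact h

lemma four_roots (a : ℝ) {x y z w : ℝ} (hxy : x ≠ y) (hxz : x ≠ z) (hxw : x ≠ w)
    (hyz : y ≠ z) (hyw : y ≠ w) (hzw : z ≠ w)
    (hx : Fc a x = 0) (hy : Fc a y = 0) (hz : Fc a z = 0) (hw : Fc a w = 0) : False := by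
  have k1 := Fc_pair a hx hy hxy
  have k2 := Fc_pair a hx hz hxz
  have k3 := Fc_pair a hx hw hxw
  have s1 : (y - z) * (22 * (x + y + z) - 23 * (a + 1)) = 0 := by linear_combination k1 - k2
  have s2 : (y - w) * (22 * (x + y + w) - 23 * (a + 1)) = 0 := by linear_combination k1 - k3
  have e1 := (mul_eq_zero.mp s1).resolve_left (sub_ne_zero.mpr hyz)
  have e2 := (mul_eq_zero.mp s2).resolve_left (sub_ne_zero.mpr hyw)
  exact hzw (by linarith)

/-- For `0 < a < 1`, `f(w) = 22w³ - 23(a+1)w² + (5a²+16a+5)w - a(a+1)` has exactly one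
root in each of `(0,a)`, `(a,(a+1)/2)` and `((a+1)/2, 1)`. -/
theorem stmt10 (a : ℝ) (ha0 : 0 < a) (ha1 : a < 1) :
    (∃! w : ℝ, w ∈ Set.Ioo 0 a ∧
      22 * w ^ 3 - 23 * (a + 1) * w ^ 2 + (5 * a ^ 2 + 16 * a + 5) * w - a * (a + 1) = 0) ∧
    (∃! w : ℝ, w ∈ Set.Ioo a ((a + 1) / 2) ∧
      22 * w ^ 3 - 23 * (a + 1) * w ^ 2 + (5 * a ^ 2 + 16 * a + 5) * w - a * (a + 1) = 0) ∧
    (∃! w : ℝ, w ∈ Set.Ioo ((a + 1) / 2) 1 ∧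
      22 * w ^ 3 - 23 * (a + 1) * w ^ 2 + (5 * a ^ 2 + 16 * a + 5) * w - a * (a + 1) = 0) := by
  have hc : Continuous (Fc a) := by unfold Fc; fun_prop
  have h0 : Fc a 0 < 0 := by unfold Fc; nlinarith
  have hA : 0 < Fc a a := by
    unfold Fc
    nlinarith [mul_pos ha0 (mul_pos (sub_pos.mpr ha1) (sub_pos.mpr ha1))]
  have hM : Fc a ((a + 1) / 2) < 0 := by
    unfold Fc
    nlinarith [mul_pos (mul_pos (sub_pos.mpr ha1) (sub_pos.mpr ha1))
      (show (0:ℝ) < 1 + a by linarith)]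
  have h1 : 0 < Fc a 1 := by
    unfold Fc
    nlinarith [mul_pos (sub_pos.mpr ha1) (sub_pos.mpr ha1)]
  have hmid1 : a < (a + 1) / 2 := by linarith
  have hmid2 : (a + 1) / 2 < 1 := by linarith
  obtain ⟨w1, hw1, hf1⟩ := intermediate_value_Ioo (le_of_lt ha0) hc.continuousOn
    (show (0:ℝ) ∈ Set.Ioo (Fc a 0) (Fc a a) from ⟨h0, hA⟩)
  obtain ⟨w2, hw2, hf2⟩ := intermediate_value_Ioo' (le_of_lt hmid1) hc.continuousOn
    (show (0:ℝ) ∈ Set.Ioo (Fc a ((a + 1) / 2)) (Fc a a) from ⟨hM, hA⟩)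
  obtain ⟨w3, hw3, hf3⟩ := intermediate_value_Ioo (le_of_lt hmid2) hc.continuousOn
    (show (0:ℝ) ∈ Set.Ioo (Fc a ((a + 1) / 2)) (Fc a 1) from ⟨hM, h1⟩)
  have hF : ∀ w : ℝ, (22 * w ^ 3 - 23 * (a + 1) * w ^ 2 + (5 * a ^ 2 + 16 * a + 5) * w
      - a * (a + 1) = 0) ↔ Fc a w = 0 := fun w => Iff.rfl
  refine ⟨⟨w1, ⟨hw1, (hF w1).mpr hf1⟩, ?_⟩, ⟨w2, ⟨hw2, (hF w2).mpr hf2⟩, ?_⟩,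
    ⟨w3, ⟨hw3, (hF w3).mpr hf3⟩, ?_⟩⟩
  · rintro y ⟨hy, hfy⟩
    by_contra hne
    exact four_roots a hne (ne_of_lt (lt_trans hy.2 hw2.1))
      (ne_of_lt (lt_trans hy.2 (lt_trans hmid1 hw3.1)))
      (ne_of_lt (lt_trans hw1.2 hw2.1))
      (ne_of_lt (lt_trans hw1.2 (lt_trans hmid1 hw3.1)))
      (ne_of_lt (lt_trans hw2.2 hw3.1)) ((hF y).mp hfy) hf1 hf2 hf3
  · rintro y ⟨hy, hfy⟩
    by_contra hne
    exact four_roots a hne (ne_of_gt (lt_trans hw1.2 hy.1))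
      (ne_of_lt (lt_trans hy.2 hw3.1))
      (ne_of_gt (lt_trans hw1.2 hw2.1))
      (ne_of_lt (lt_trans hw2.2 hw3.1))
      (ne_of_lt (lt_trans hw1.2 (lt_trans hmid1 hw3.1)))
      ((hF y).mp hfy) hf2 hf1 hf3
  · rintro y ⟨hy, hfy⟩
    by_contra hne
    exact four_roots a hne (ne_of_gt (lt_trans hw1.2 (lt_trans hmid1 hy.1)))
      (ne_of_gt (lt_trans hw2.2 hy.1))
      (ne_of_gt (lt_trans hw1.2 (lt_trans hmid1 hw3.1)))
      (ne_of_gt (lt_trans hw2.2 hw3.1))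
      (ne_of_lt (lt_trans hw1.2 hw2.1)) ((hF y).mp hfy) hf3 hf1 hf2
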